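/- Let C be a finite connected subgraph of Z^2 and let e = {u,v} ∈ ∂C be a boundary edge with u ∈ V(C). Classify boundary edges: e is awful for C if |∂(C+e)| − |∂C| ≤ 1. Then for any ℓ ≥ 1 and any edge f that is awful for C, if f ∈ ∂(C+e) (f is not the added edge e), then f is also awful for C+e. -/

import Mathlib

open SimpleGraph

/-- The square lattice `ℤ²`. -/
def Grid : SimpleGraph (ℤ × ℤ) where
  Adj u v := |u.1 - v.1| + |u.2 - v.2| = 1
  symm := ⟨by intro u v h; simpa [abs_sub_comm] using h⟩
  loopless := ⟨by intro u h; simp at h⟩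

/-- The edge boundary of a subgraph `H` of `ℤ²`: edges of the lattice not in `H`
but incident to a vertex of `H`. -/
def edgeBoundary (H : Grid.Subgraph) : Set (Sym2 (ℤ × ℤ)) :=
  {e | e ∈ Grid.edgeSet ∧ e ∉ H.edgeSet ∧ ∃ v ∈ H.verts, v ∈ e}
/-- An edge `f = {a,b}` in the boundary of `C` is awful for `C` if adding it
increases the boundary by at most `1`. -/
def AwfulFor (C : Grid.Subgraph) {a b : ℤ × ℤ} (hf : Grid.Adj a b) : Prop :=
  s(a, b) ∈ edgeBoundary C ∧
    (edgeBoundary (C ⊔ Grid.subgraphOfAdj hf)).ncard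
      ≤ (edgeBoundary C).ncard + 1

/-- Observation 4.5 (first half): if `f` is awful for `C` and remains a boundary
edge after Maker adds a boundary edge `e = {u,v}` to `C`, then `f` is awful for
`C + e`. -/
lemma grid_dir {x y : ℤ × ℤ} (h : Grid.Adj x y) :
    (y.1 - x.1, y.2 - x.2) ∈ ({(1,0),(-1,0),(0,1),(0,-1)} : Set (ℤ × ℤ)) := by
  have h' : |x.1 - y.1| + |x.2 - y.2| = 1 := h
  simp only [Set.mem_insert_iff, Set.mem_singleton_iff, Prod.ext_iff]
  rcases abs_cases (x.1 - y.1) with ⟨h1, _⟩ | ⟨h1, _⟩ <;>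
    rcases abs_cases (x.2 - y.2) with ⟨h2, _⟩ | ⟨h2, _⟩ <;>
    rw [h1, h2] at h' <;> omega

lemma edgeBoundary_finite (H : Grid.Subgraph) (hfin : H.verts.Finite) :
    (edgeBoundary H).Finite := by
  apply Set.Finite.subset
    ((hfin.prod (Set.toFinite ({(1,0),(-1,0),(0,1),(0,-1)} : Set (ℤ × ℤ)))).image
      (fun p => s(p.1, p.1 + p.2)))
  rintro g ⟨hg, -, w, hw, hwg⟩
  induction g with
  | _ x y =>
    rw [SimpleGraph.mem_edgeSet] at hg
    rw [Sym2.mem_iff] at hwg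
    rcases hwg with rfl | rfl
    · refine ⟨(w, (y.1 - w.1, y.2 - w.2)), ⟨hw, grid_dir hg⟩, ?_⟩
      simp only
      congr 1
      ext <;> simp
    · refine ⟨(w, (x.1 - w.1, x.2 - w.2)), ⟨hw, grid_dir hg.symm⟩, ?_⟩
      simp only
      rw [Sym2.eq_swap]
      congr 1
      ext <;> simp


theorem awful_stays_awful (C : Grid.Subgraph) (hconn : C.Connected)
    (hfin : C.verts.Finite) (u v : ℤ × ℤ) (h : Grid.Adj u v)
    (he : s(u, v) ∈ edgeBoundary C) {a b : ℤ × ℤ} (hf : Grid.Adj a b)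
    (hawful : AwfulFor C hf)
    (hstill : s(a, b) ∈ edgeBoundary (C ⊔ Grid.subgraphOfAdj h)) :
    AwfulFor (C ⊔ Grid.subgraphOfAdj h) hf := by
  obtain ⟨hfB0, hle⟩ := hawful
  refine ⟨hstill, ?_⟩
  have hEv : (Grid.subgraphOfAdj h).verts.Finite := by
    rw [subgraphOfAdj_verts]; exact (Set.finite_singleton v).insert u
  have hFv : (Grid.subgraphOfAdj hf).verts.Finite := by
    rw [subgraphOfAdj_verts]; exact (Set.finite_singleton b).insert a
  have finB0 : (edgeBoundary C).Finite := edgeBoundary_finite C hfin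
  have finB1 : (edgeBoundary (C ⊔ Grid.subgraphOfAdj h)).Finite :=
    edgeBoundary_finite _ (by rw [Subgraph.verts_sup]; exact hfin.union hEv)
  have finB2 : (edgeBoundary (C ⊔ Grid.subgraphOfAdj hf)).Finite :=
    edgeBoundary_finite _ (by rw [Subgraph.verts_sup]; exact hfin.union hFv)
  -- key inclusion
  have hsub : edgeBoundary (C ⊔ Grid.subgraphOfAdj h ⊔ Grid.subgraphOfAdj hf) ⊆
      (edgeBoundary (C ⊔ Grid.subgraphOfAdj h) \ {s(a, b)}) ∪
      (edgeBoundary (C ⊔ Grid.subgraphOfAdj hf) \ edgeBoundary C) := by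
    rintro g ⟨hg, hgEF, w, hw, hwg⟩
    have hgne : g ≠ s(a, b) := by
      rintro rfl
      exact hgEF (by rw [Subgraph.edgeSet_sup]; right
                     rw [edgeSet_subgraphOfAdj]; rfl)
    have hgC : g ∉ C.edgeSet := fun hc =>
      hgEF (by rw [Subgraph.edgeSet_sup, Subgraph.edgeSet_sup]; exact Or.inl (Or.inl hc))
    have hgCE : g ∉ (C ⊔ Grid.subgraphOfAdj h).edgeSet := fun hc =>
      hgEF (by rw [Subgraph.edgeSet_sup]; exact Or.inl hc)
    by_cases h1 : g ∈ edgeBoundary (C ⊔ Grid.subgraphOfAdj h)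
    · exact Or.inl ⟨h1, hgne⟩
    · rw [Subgraph.verts_sup] at hw
      rcases hw with hw | hw
      · exact absurd ⟨hg, hgCE, w, hw, hwg⟩ h1
      · have hgCF : g ∉ (C ⊔ Grid.subgraphOfAdj hf).edgeSet := by
          rw [Subgraph.edgeSet_sup]
          rintro (hc | hc)
          · exact hgC hc
          · rw [edgeSet_subgraphOfAdj] at hc
            exact hgne hc
        refine Or.inr ⟨⟨hg, hgCF, w, ?_, hwg⟩, ?_⟩
        · rw [Subgraph.verts_sup]
          right
          rw [subgraphOfAdj_verts] at hw ⊢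
          exact hw
        · rintro ⟨-, -, w', hw', hw'g⟩
          exact h1 ⟨hg, hgCE, w', by rw [Subgraph.verts_sup]; exact Or.inl hw', hw'g⟩
  -- f itself is not in the boundary of C ⊔ F
  have hfnotB2 : s(a, b) ∉ edgeBoundary (C ⊔ Grid.subgraphOfAdj hf) := by
    rintro ⟨-, hgCF, -⟩
    exact hgCF (by rw [Subgraph.edgeSet_sup]; right
                   rw [edgeSet_subgraphOfAdj]; rfl)
  have hB2eq : edgeBoundary (C ⊔ Grid.subgraphOfAdj hf) =
      (edgeBoundary C \ {s(a, b)}) ∪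
      (edgeBoundary (C ⊔ Grid.subgraphOfAdj hf) \ edgeBoundary C) := by
    ext g
    constructor
    · intro hg2
      by_cases hg0 : g ∈ edgeBoundary C
      · exact Or.inl ⟨hg0, fun hgf => hfnotB2 (by rwa [← Set.mem_singleton_iff.mp hgf])⟩
      · exact Or.inr ⟨hg2, hg0⟩
    · rintro (⟨⟨hg, hgC, w, hw, hwg⟩, hne⟩ | ⟨hg2, -⟩)
      · refine ⟨hg, ?_, w, by rw [Subgraph.verts_sup]; exact Or.inl hw, hwg⟩
        rw [Subgraph.edgeSet_sup]
        rintro (hc | hc)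
        · exact hgC hc
        · rw [edgeSet_subgraphOfAdj] at hc
          exact hne hc
      · exact hg2
  have hdisj : Disjoint (edgeBoundary C \ {s(a, b)})
      (edgeBoundary (C ⊔ Grid.subgraphOfAdj hf) \ edgeBoundary C) :=
    Set.disjoint_of_subset Set.diff_subset (le_refl _) Set.disjoint_sdiff_right
  have h2card : (edgeBoundary (C ⊔ Grid.subgraphOfAdj hf)).ncard =
      (edgeBoundary C \ {s(a, b)}).ncard +
      ((edgeBoundary (C ⊔ Grid.subgraphOfAdj hf) \ edgeBoundary C)).ncard := by
    nth_rewrite 1 [hB2eq]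
    exact Set.ncard_union_eq hdisj (finB0.diff) (finB2.diff)
  have h0card : (edgeBoundary C \ {s(a, b)}).ncard + 1 = (edgeBoundary C).ncard :=
    Set.ncard_diff_singleton_add_one hfB0 finB0
  have h1card : (edgeBoundary (C ⊔ Grid.subgraphOfAdj h) \ {s(a, b)}).ncard + 1 =
      (edgeBoundary (C ⊔ Grid.subgraphOfAdj h)).ncard :=
    Set.ncard_diff_singleton_add_one hstill finB1
  have h3 : (edgeBoundary (C ⊔ Grid.subgraphOfAdj h ⊔ Grid.subgraphOfAdj hf)).ncard ≤
      (edgeBoundary (C ⊔ Grid.subgraphOfAdj h) \ {s(a, b)}).ncard +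
      ((edgeBoundary (C ⊔ Grid.subgraphOfAdj hf) \ edgeBoundary C)).ncard :=
    le_trans (Set.ncard_le_ncard hsub ((finB1.diff).union (finB2.diff)))
      (Set.ncard_union_le _ _)
  omega
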